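/- For every integer m ≥ 4 and every n ≥ 1, the inequality H_{n,(2^m,1)}(x) ≥ H_{n,(3,1^{2m−2})}(x) holds for all x ∈ [0,∞)^n. Explicitly: (h_{n,2}(x))^m · h_{n,1}(x) / (C(n+1,2)^m · n) ≥ h_{n,3}(x) · (h_{n,1}(x))^{2m−2} / (C(n+2,3) · n^{2m−2}) for all x ∈ [0,∞)^n. -/

import Mathlib

/-- The complete homogeneous symmetric polynomial `h_{n,k}`, as a function on `ℝ^n`:
the sum of all monomials of total degree `k` in `x 0, …, x (n-1)` (with `h_{n,0} = 1`). -/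
noncomputable def hsym (n k : ℕ) (x : Fin n → ℝ) : ℝ :=
  ∑ d ∈ Finset.Nat.antidiagonalTuple n k, ∏ i, x i ^ d i

lemma hsym_zero (n : ℕ) (x : Fin n → ℝ) : hsym n 0 x = 1 := by
  simp [hsym, Finset.Nat.antidiagonalTuple_zero_right]

lemma hsym_succ (n k : ℕ) (y : Fin (n+1) → ℝ) :
    hsym (n+1) k y
      = ∑ p ∈ Finset.HasAntidiagonal.antidiagonal k, y 0 ^ p.1 * hsym n p.2 (Fin.tail y) := by
  rw [hsym]
  simp_rw [hsym, Finset.mul_sum]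
  rw [show ∑ p ∈ Finset.HasAntidiagonal.antidiagonal k, ∑ e ∈ Finset.Nat.antidiagonalTuple n p.2,
        y 0 ^ p.1 * ∏ i, Fin.tail y i ^ e i
      = ∑ x ∈ (Finset.HasAntidiagonal.antidiagonal k).sigma (fun p => Finset.Nat.antidiagonalTuple n p.2),
        y 0 ^ x.1.1 * ∏ i, Fin.tail y i ^ x.2 i from
    Finset.sum_sigma' _ _ _]
  apply Finset.sum_nbij' (i := fun d => ⟨(d 0, ∑ i, Fin.tail d i), Fin.tail d⟩)
    (j := fun p => Fin.cons p.1.1 p.2)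
  · intro d hd
    rw [Finset.Nat.mem_antidiagonalTuple] at hd
    simp only [Finset.mem_sigma, Finset.Nat.mem_antidiagonalTuple, Finset.HasAntidiagonal.mem_antidiagonal,
      and_true]
    rw [← hd, Fin.sum_univ_succ]; rfl
  · intro p hp
    rw [Finset.mem_sigma, Finset.Nat.mem_antidiagonalTuple] at hp
    rw [Finset.Nat.mem_antidiagonalTuple, Fin.sum_cons, hp.2]
    exact Finset.HasAntidiagonal.mem_antidiagonal.mp hp.1
  · intro d _; exact Fin.cons_self_tail d
  · intro p hp
    rw [Finset.mem_sigma, Finset.Nat.mem_antidiagonalTuple] at hp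
    simp [Fin.tail_cons, hp.2]

  · intro d _
    rw [Fin.prod_univ_succ]
    rfl

lemma hsym_one_eq (n : ℕ) (x : Fin n → ℝ) : hsym n 1 x = ∑ i, x i := by
  induction n with
  | zero => simp [hsym]
  | succ n ih =>
    rw [hsym_succ, Finset.Nat.sum_antidiagonal_eq_sum_range_succ_mk]
    simp only [Finset.sum_range_succ, Finset.sum_range_zero, Fin.sum_univ_succ]
    rw [ih, hsym_zero]
    ring_nf
    rfl

lemma hsym_two_eq (n : ℕ) (x : Fin n → ℝ) :
    hsym n 2 x = ((∑ i, x i) ^ 2 + ∑ i, x i ^ 2) / 2 := by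
  induction n with
  | zero => simp [hsym]
  | succ n ih =>
    rw [hsym_succ, Finset.Nat.sum_antidiagonal_eq_sum_range_succ_mk]
    simp only [Finset.sum_range_succ, Finset.sum_range_zero]
    rw [ih, hsym_zero, hsym_one_eq]
    rw [Fin.sum_univ_succ (f := x), Fin.sum_univ_succ (f := fun i => x i ^ 2)]
    show (0 : ℝ) + _ + _ + _ = _
    ring_nf
    rfl

lemma hsym_three_eq (n : ℕ) (x : Fin n → ℝ) :
    hsym n 3 x = ((∑ i, x i) ^ 3 + 3 * (∑ i, x i) * (∑ i, x i ^ 2)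
      + 2 * ∑ i, x i ^ 3) / 6 := by
  induction n with
  | zero => simp [hsym]
  | succ n ih =>
    rw [hsym_succ, Finset.Nat.sum_antidiagonal_eq_sum_range_succ_mk]
    simp only [Finset.sum_range_succ, Finset.sum_range_zero]
    rw [ih, hsym_zero, hsym_one_eq, hsym_two_eq]
    rw [Fin.sum_univ_succ (f := x), Fin.sum_univ_succ (f := fun i => x i ^ 2),
      Fin.sum_univ_succ (f := fun i => x i ^ 3)]
    show (0 : ℝ) + _ + _ + _ + _ = _
    ring_nf
    rfl

lemma key_poly (v s w : ℝ) (hv : 1 ≤ v) (hs : 0 ≤ s) (hw : 0 ≤ w) :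
    ((v+1)*(v+2)*s^3 + 3*v*(v+2)*s*w^2 + 2*v^2*w^3) * (s^5*(v+1)^3)
      ≤ (v+2)*((v+1)*s^2 + v*w^2)^4 := by
  have hv0 : (0:ℝ) < v := lt_of_lt_of_le one_pos hv
  have hα : (0:ℝ) < v*(v+1)^3*(v+2) := by positivity
  have hd : (v*(v+1)^3*(v+2)) * ((v+2)*((v+1)*s^2 + v*w^2)^4
        - ((v+1)*(v+2)*s^3 + 3*v*(v+2)*s*w^2 + 2*v^2*w^3) * (s^5*(v+1)^3)) =
      w^2*s^4*((v*(v+1)^3*(v+2)*s - v^2*(v+1)^3*w)^2 + v^3*(v+1)^5*(5*v^2+23*v+24)*w^2)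
        + (v*(v+1)^3*(v+2)) * (4*v^3*(v+1)*(v+2)*s^2*w^6 + v^4*(v+2)*w^8) := by
    ring
  have hN : 0 ≤ w^2*s^4*((v*(v+1)^3*(v+2)*s - v^2*(v+1)^3*w)^2 + v^3*(v+1)^5*(5*v^2+23*v+24)*w^2)
        + (v*(v+1)^3*(v+2)) * (4*v^3*(v+1)*(v+2)*s^2*w^6 + v^4*(v+2)*w^8) := by
    positivity
  nlinarith [hd, hN, hα]

lemma boot (A B C : ℝ) (k : ℕ) (hA : 0 ≤ A) (hB : 0 ≤ B) (hC : 0 ≤ C)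
    (hAB : A^2 ≤ B) (hcore : C*A^5 ≤ B^4) : C*A^(2*k+6) ≤ B^(k+4)*A := by
  have h1 : C*A^(2*k+6) = (C*A^5) * ((A^2)^k * A) := by ring
  have h2 : (0:ℝ) ≤ (A^2)^k * A := by positivity
  have h3 : (A^2)^k ≤ B^k := pow_le_pow_left₀ (by positivity) hAB k
  calc C*A^(2*k+6) = (C*A^5) * ((A^2)^k * A) := h1
    _ ≤ B^4 * ((A^2)^k * A) := mul_le_mul_of_nonneg_right hcore h2
    _ ≤ B^4 * (B^k * A) := by
        apply mul_le_mul_of_nonneg_left _ (by positivity)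
        exact mul_le_mul_of_nonneg_right h3 hA
    _ = B^(k+4)*A := by ring

lemma choose_two_cast (n : ℕ) : (((n+1).choose 2 : ℕ) : ℝ) = (n+1)*n/2 := by
  induction n with
  | zero => simp
  | succ n ih =>
    rw [show n+1+1 = (n+1)+1 from rfl, Nat.choose_succ_succ (n+1) 1]
    push_cast [Nat.choose_one_right]
    push_cast at ih
    rw [ih]; ring

lemma choose_three_cast (n : ℕ) : (((n+2).choose 3 : ℕ) : ℝ) = (n+2)*(n+1)*n/6 := by
  induction n with
  | zero => simp
  | succ n ih =>
    rw [show n+1+2 = (n+2)+1 from rfl, Nat.choose_succ_succ (n+2) 2]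
    push_cast [choose_two_cast (n+1)]
    push_cast at ih
    rw [ih]; ring

set_option maxHeartbeats 1000000 in
/-- For every `m ≥ 4` and `n ≥ 1`, `H_{n,(2^m,1)} ≥ H_{n,(3,1^{2m−2})}` on `[0,∞)^n`:
explicitly,
`h_{n,2}^m·h_{n,1} / (C(n+1,2)^m·n) ≥ h_{n,3}·h_{n,1}^{2m−2} / (C(n+2,3)·n^{2m−2})`. -/
theorem H_two_pow_m_one_ge (m n : ℕ) (hm : 4 ≤ m) (hn : 1 ≤ n)
    (x : Fin n → ℝ) (hx : ∀ i, 0 ≤ x i) :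
    hsym n 3 x * (hsym n 1 x) ^ (2 * m - 2) /
        (((n + 2).choose 3 : ℝ) * (n : ℝ) ^ (2 * m - 2)) ≤
      (hsym n 2 x) ^ m * hsym n 1 x / ((((n + 1).choose 2 : ℝ)) ^ m * (n : ℝ)) := by
  obtain ⟨k, rfl⟩ : ∃ k, m = k + 4 := ⟨m - 4, by omega⟩
  rw [hsym_one_eq, hsym_two_eq, hsym_three_eq, choose_two_cast, choose_three_cast,
    show 2*(k+4)-2 = 2*k+6 from by omega]
  set s := ∑ i, x i with hsdef
  set q := ∑ i, x i ^ 2 with hqdef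
  set r := ∑ i, x i ^ 3 with hrdef
  set ν : ℝ := (n : ℝ) with hνdef
  have hν : (1:ℝ) ≤ ν := by rw [hνdef]; exact_mod_cast hn
  have hν0 : (0:ℝ) < ν := lt_of_lt_of_le one_pos hν
  have hs : 0 ≤ s := Finset.sum_nonneg fun i _ => hx i
  have hq0 : 0 ≤ q := Finset.sum_nonneg fun i _ => pow_nonneg (hx i) 2
  have hr0 : 0 ≤ r := Finset.sum_nonneg fun i _ => pow_nonneg (hx i) 3
  have hCS : s^2 ≤ ν*q := by
    have h := sq_sum_le_card_mul_sum_sq (s := (Finset.univ : Finset (Fin n))) (f := x)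
    simpa [Finset.card_univ, ← hsdef, ← hqdef, ← hνdef] using h
  have hVnn : 0 ≤ q - s^2/ν := by
    rw [sub_nonneg, div_le_iff₀ hν0]; nlinarith [hCS]
  set w := Real.sqrt (q - s^2/ν) with hwdef
  have hw0 : 0 ≤ w := Real.sqrt_nonneg _
  have hw2 : w^2 = q - s^2/ν := Real.sq_sqrt hVnn
  have hqP : ν*q = s^2 + ν*w^2 := by
    rw [hw2]; field_simp; ring
  set μ := s/ν with hμdef
  have e2 : ∑ i, (x i - μ)^2 = q - 2*μ*s + ν*μ^2 := by
    have h1 : ∀ i ∈ (Finset.univ : Finset (Fin n)),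
        (x i - μ)^2 = x i^2 - 2*μ*x i + μ^2 := fun i _ => by ring
    rw [Finset.sum_congr rfl h1]
    simp only [Finset.sum_add_distrib, Finset.sum_sub_distrib, ← Finset.mul_sum,
      Finset.sum_const, Finset.card_univ, Fintype.card_fin, nsmul_eq_mul]
    all_goals try rw [← hqdef, ← hsdef, ← hνdef]
    all_goals try ring
  have e3 : ∑ i, (x i - μ)^3 = r - 3*μ*q + 3*μ^2*s - ν*μ^3 := by
    have h1 : ∀ i ∈ (Finset.univ : Finset (Fin n)),
        (x i - μ)^3 = x i^3 - 3*μ*x i^2 + 3*μ^2*x i - μ^3 := fun i _ => by ring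
    rw [Finset.sum_congr rfl h1]
    simp only [Finset.sum_add_distrib, Finset.sum_sub_distrib, ← Finset.mul_sum,
      Finset.sum_const, Finset.card_univ, Fintype.card_fin, nsmul_eq_mul]
    all_goals try rw [← hqdef, ← hsdef, ← hrdef, ← hνdef]
    all_goals try ring
  have hY2 : ∑ i, (x i - μ)^2 = w^2 := by
    rw [e2, hw2, hμdef]; field_simp; ring
  have hμν : ν*μ = s := by rw [hμdef]; field_simp
  clear_value s q r ν w μ
  clear hsdef hqdef hrdef hνdef hwdef hμdef
  have hterm : ∀ i ∈ (Finset.univ : Finset (Fin n)), (x i - μ)^3 ≤ w*(x i - μ)^2 := by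
    intro i _
    rcases le_or_gt (x i - μ) 0 with h | h
    · have h3 : (x i - μ)^3 ≤ 0 := Odd.pow_nonpos (by decide) h
      exact le_trans h3 (mul_nonneg hw0 (sq_nonneg _))
    · have hle : (x i - μ)^2 ≤ w^2 := by
        rw [← hY2]
        exact Finset.single_le_sum (f := fun j => (x j - μ)^2) (fun j _ => sq_nonneg _) (Finset.mem_univ i)
      have hxw : x i - μ ≤ w := by nlinarith [hle, hw0, h]
      calc (x i - μ)^3 = (x i - μ)*(x i - μ)^2 := by ring
        _ ≤ w*(x i - μ)^2 := mul_le_mul_of_nonneg_right hxw (sq_nonneg _)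
  have hY3 : ∑ i, (x i - μ)^3 ≤ w^3 := by
    calc ∑ i, (x i - μ)^3 ≤ ∑ i, w*(x i - μ)^2 := Finset.sum_le_sum hterm
      _ = w * ∑ i, (x i - μ)^2 := by rw [Finset.mul_sum]
      _ = w^3 := by rw [hY2]; ring
  have hrP : ν^2*r ≤ ν^2*w^3 + 3*ν*s*q - 2*s^3 := by
    have h := hY3
    rw [e3] at h
    have h2 := mul_le_mul_of_nonneg_left h (le_of_lt (by positivity : (0:ℝ) < ν^2))
    have c1 : ν^2*(3*μ*q) = 3*ν*s*q := by rw [← hμν]; ring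
    have c2 : ν^2*(3*μ^2*s) = 3*s^3 := by rw [← hμν]; ring
    have c3 : ν^2*(ν*μ^3) = s^3 := by rw [← hμν]; ring
    nlinarith [h2, c1, c2, c3]
  have hq3 : 3*(ν+2)*s*(ν*q) = 3*(ν+2)*s*(s^2+ν*w^2) := by rw [hqP]
  have e1 : (s^3+3*s*q+2*r)*ν^2 ≤ (ν+1)*(ν+2)*s^3 + 3*ν*(ν+2)*s*w^2 + 2*ν^2*w^3 := by
    nlinarith [hrP, hq3]
  have hcore : (s^3+3*s*q+2*r)*s^5*(ν+1)^3 ≤ (s^2+q)^4*(ν^2*(ν+2)) := by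
    have hkey := key_poly ν s w hν hs hw0
    have hmul := mul_le_mul_of_nonneg_right e1 (by positivity : (0:ℝ) ≤ s^5*(ν+1)^3)
    have hid : (ν+2)*((ν+1)*s^2+ν*w^2)^4 = ((s^2+q)^4*(ν^2*(ν+2)))*ν^2 := by
      have hh : (ν+1)*s^2+ν*w^2 = ν*(s^2+q) := by linarith [hqP]
      rw [hh]; ring
    have h2 : ((s^3+3*s*q+2*r)*s^5*(ν+1)^3)*ν^2 ≤ ((s^2+q)^4*(ν^2*(ν+2)))*ν^2 := by
      calc ((s^3+3*s*q+2*r)*s^5*(ν+1)^3)*ν^2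
          = ((s^3+3*s*q+2*r)*ν^2)*(s^5*(ν+1)^3) := by ring
        _ ≤ ((ν+1)*(ν+2)*s^3 + 3*ν*(ν+2)*s*w^2 + 2*ν^2*w^3)*(s^5*(ν+1)^3) := hmul
        _ ≤ (ν+2)*((ν+1)*s^2+ν*w^2)^4 := hkey
        _ = ((s^2+q)^4*(ν^2*(ν+2)))*ν^2 := hid
    exact le_of_mul_le_mul_right h2 (by positivity)
  -- abbreviations for the normalized quantities
  have hA : (0:ℝ) ≤ s/ν := div_nonneg hs hν0.le
  have hB : (0:ℝ) ≤ ((s^2+q)/2)/((ν+1)*ν/2) := by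
    apply div_nonneg _ (by positivity)
    nlinarith [sq_nonneg s, hq0]
  have hC : (0:ℝ) ≤ ((s^3+3*s*q+2*r)/6)/((ν+2)*(ν+1)*ν/6) := by
    apply div_nonneg _ (by positivity)
    nlinarith [pow_nonneg hs 3, mul_nonneg hs hq0, hr0]
  have hAB : (s/ν)^2 ≤ ((s^2+q)/2)/((ν+1)*ν/2) := by
    rw [div_pow, div_le_div_iff₀ (by positivity) (by positivity)]
    nlinarith [mul_le_mul_of_nonneg_left hCS hν0.le, sq_nonneg s, hν0]
  have hcore' : (((s^3+3*s*q+2*r)/6)/((ν+2)*(ν+1)*ν/6))*(s/ν)^5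
      ≤ (((s^2+q)/2)/((ν+1)*ν/2))^4 := by
    rw [div_pow, div_pow, div_mul_div_comm, div_le_div_iff₀ (by positivity) (by positivity)]
    calc (s^3+3*s*q+2*r)/6*s^5*(((ν+1)*ν/2)^4)
        = ((s^3+3*s*q+2*r)*s^5*(ν+1)^3) * (ν^4*(ν+1)/96) := by ring
      _ ≤ ((s^2+q)^4*(ν^2*(ν+2))) * (ν^4*(ν+1)/96) :=
          mul_le_mul_of_nonneg_right hcore (by positivity)
      _ = ((s^2+q)/2)^4*((ν+2)*(ν+1)*ν/6*ν^5) := by ring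
  refine le_trans (le_of_eq ?_)
    (le_trans (boot (s/ν) (((s^2+q)/2)/((ν+1)*ν/2)) (((s^3+3*s*q+2*r)/6)/((ν+2)*(ν+1)*ν/6))
      k hA hB hC hAB hcore') (le_of_eq ?_))
  · rw [div_pow, div_mul_div_comm]
  · rw [div_pow, div_mul_div_comm]
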